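/- Under Assumption: $s < \infty$, $\hat{g}_n \to \mathring{g}$ in probability with $\mathring{g}$ isotonic, and $B_n(\hat{g}_n - \mathring{g}) \Rightarrow \lambda$ where $B_n = \mathrm{diag}(n^{q_1},\dots,n^{q_s})$ with $q_i > 0$ constant on each comparable level index set of $\mathring{g}$. Then $B_n(\hat{g}_n^* - \mathring{g}) \Rightarrow \varphi(\lambda)$, where $\hat{g}_n^*$ is the isotonic regression of $\hat{g}_n$ with positive weights $w$, and $\varphi: \mathbb{R}^s \to \mathbb{R}^s$ maps a vector $\theta$ to the concatenation of the separate isotonic regressions of the restrictions of $\theta$ to the comparable level sets of $\mathring{g}$. -/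

import Mathlib

open Finset Filter MeasureTheory

/-- The (weighted) isotonic regression predicate over a finite pre-ordered index set. -/
def IsIsoReg {ι : Type*} [Fintype ι] (r : ι → ι → Prop) (w g gstar : ι → ℝ) : Prop :=
  (∀ i j, r i j → gstar i ≤ gstar j) ∧
  ∀ ξ : ι → ℝ, (∀ i j, r i j → ξ i ≤ ξ j) →
    ∑ i, (gstar i - g i) ^ 2 * w i ≤ ∑ i, (ξ i - g i) ^ 2 * w i

lemma iso_unique {ι : Type*} [Fintype ι] {r : ι → ι → Prop} {w g p p' : ι → ℝ}
    (hw : ∀ i, 0 < w i) (h : IsIsoReg r w g p) (h' : IsIsoReg r w g p') : p = p' := by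
  have hfeas : ∀ i j, r i j → (p i + p' i) / 2 ≤ (p j + p' j) / 2 := fun i j hij => by
    have h1 := h.1 i j hij; have h2 := h'.1 i j hij; linarith
  have h1 := h.2 p' h'.1
  have h2 := h'.2 p h.1
  have h3 := h.2 _ hfeas
  have key : ∑ i, ((p i + p' i) / 2 - g i) ^ 2 * w i
      = (∑ i, (p i - g i) ^ 2 * w i) / 2 + (∑ i, (p' i - g i) ^ 2 * w i) / 2
        - (∑ i, (p i - p' i) ^ 2 * w i) / 4 := by
    rw [Finset.sum_div, Finset.sum_div, Finset.sum_div, ← Finset.sum_add_distrib,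
      ← Finset.sum_sub_distrib]
    exact Finset.sum_congr rfl fun i _ => by ring
  rw [key] at h3
  have hQ : ∑ i, (p i - p' i) ^ 2 * w i ≤ 0 := by linarith
  have hz : ∀ i ∈ Finset.univ, (p i - p' i) ^ 2 * w i = 0 := by
    rw [← Finset.sum_eq_zero_iff_of_nonneg
      (fun i _ => mul_nonneg (sq_nonneg _) (hw i).le)]
    have h4 : (0:ℝ) ≤ ∑ i, (p i - p' i) ^ 2 * w i :=
      Finset.sum_nonneg fun i _ => mul_nonneg (sq_nonneg _) (hw i).le
    linarith
  funext i
  have hi := hz i (Finset.mem_univ i)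
  rcases mul_eq_zero.mp hi with h4 | h4
  · have := pow_eq_zero_iff (n := 2) (by norm_num) |>.mp h4
    linarith
  · exact absurd h4 (ne_of_gt (hw i))

lemma iso_clamp {ι : Type*} [Fintype ι] {r : ι → ι → Prop} {w g p : ι → ℝ}
    (hw : ∀ i, 0 < w i) (h : IsIsoReg r w g p) {lo hi : ℝ}
    (hglo : ∀ i, lo ≤ g i) (hghi : ∀ i, g i ≤ hi) (i : ι) : lo ≤ p i ∧ p i ≤ hi := by
  set ξ : ι → ℝ := fun j => max lo (min hi (p j)) with hξdef
  have hfeas : ∀ a b, r a b → ξ a ≤ ξ b := fun a b hab =>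
    max_le_max le_rfl (min_le_min le_rfl (h.1 a b hab))
  have hterm : ∀ j, (ξ j - g j) ^ 2 * w j ≤ (p j - g j) ^ 2 * w j := by
    intro j
    have hwj := (hw j).le
    have h1 := hglo j; have h2 := hghi j
    rcases le_total (p j) lo with hc | hc
    · have he : ξ j = lo := by
        simp only [hξdef]
        rw [min_eq_right (hc.trans (h1.trans h2)), max_eq_left hc]
      rw [he]
      have key : (0:ℝ) ≤ ((lo - p j) * (2 * g j - p j - lo)) * w j :=
        mul_nonneg (mul_nonneg (by linarith) (by linarith)) hwj
      nlinarith [key]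
    · rcases le_total hi (p j) with hc2 | hc2
      · have he : ξ j = hi := by
          simp only [hξdef]; rw [min_eq_left hc2, max_eq_right (h1.trans h2)]
        rw [he]
        have key : (0:ℝ) ≤ ((p j - hi) * (p j + hi - 2 * g j)) * w j :=
          mul_nonneg (mul_nonneg (by linarith) (by linarith)) hwj
        nlinarith [key]
      · have he : ξ j = p j := by
          simp only [hξdef]; rw [min_eq_right hc2, max_eq_right hc]
        rw [he]
  have hobj : ∑ j, (ξ j - g j) ^ 2 * w j ≤ ∑ j, (p j - g j) ^ 2 * w j :=
    Finset.sum_le_sum fun j _ => hterm j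
  have hξiso : IsIsoReg r w g ξ := ⟨hfeas, fun ζ hζ => hobj.trans (h.2 ζ hζ)⟩
  have hpξ : p = ξ := iso_unique hw h hξiso
  constructor
  · rw [hpξ]; exact le_max_left _ _
  · rw [hpξ]; exact max_le ((hglo i).trans (hghi i)) (min_le_left _ _)

lemma iso_vi {ι : Type*} [Fintype ι] {r : ι → ι → Prop} {w g p : ι → ℝ}
    (hw : ∀ i, 0 ≤ w i) (h : IsIsoReg r w g p) {ξ : ι → ℝ}
    (hξ : ∀ i j, r i j → ξ i ≤ ξ j) :
    ∑ i, (g i - p i) * (ξ i - p i) * w i ≤ 0 := by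
  set A : ℝ := ∑ i, (p i - g i) * (ξ i - p i) * w i with hA
  set B : ℝ := ∑ i, (ξ i - p i) ^ 2 * w i with hB
  have hBnn : 0 ≤ B :=
    Finset.sum_nonneg fun i _ => mul_nonneg (sq_nonneg _) (hw i)
  have ht : ∀ t : ℝ, 0 ≤ t → t ≤ 1 → 0 ≤ 2 * t * A + t ^ 2 * B := by
    intro t ht0 ht1
    have hfeas : ∀ i j, r i j → p i + t * (ξ i - p i) ≤ p j + t * (ξ j - p j) := by
      intro i j hij
      have h1 := h.1 i j hij
      have h2 := hξ i j hij
      nlinarith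
    have hmin := h.2 _ hfeas
    have hexp : ∑ i, (p i + t * (ξ i - p i) - g i) ^ 2 * w i
        = ∑ i, (p i - g i) ^ 2 * w i + (2 * t * A + t ^ 2 * B) := by
      rw [hA, hB, Finset.mul_sum, Finset.mul_sum, ← Finset.sum_add_distrib,
        ← Finset.sum_add_distrib]
      exact Finset.sum_congr rfl fun i _ => by ring
    rw [hexp] at hmin
    linarith
  have hApos : 0 ≤ A := by
    by_contra hneg
    push_neg at hneg
    rcases eq_or_lt_of_le hBnn with hB0 | hBpos
    · have := ht 1 zero_le_one le_rfl
      rw [← hB0] at this; nlinarith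
    · have ht0 : 0 < min 1 (-A / B) :=
        lt_min one_pos (div_pos (neg_pos.mpr hneg) hBpos)
      have htv := ht (min 1 (-A / B)) ht0.le (min_le_left _ _)
      have htB : min 1 (-A / B) * B ≤ -A := by
        have hle : min 1 (-A / B) ≤ -A / B := min_le_right _ _
        calc min 1 (-A / B) * B ≤ (-A / B) * B := by nlinarith
          _ = -A := by field_simp
      nlinarith
  have hneg : ∑ i, (g i - p i) * (ξ i - p i) * w i = -A := by
    rw [hA, ← Finset.sum_neg_distrib]
    exact Finset.sum_congr rfl fun i _ => by ring
  rw [hneg]; linarith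

lemma iso_contract {ι : Type*} [Fintype ι] {r : ι → ι → Prop} {w g1 g2 p1 p2 : ι → ℝ}
    (hw : ∀ i, 0 ≤ w i) (h1 : IsIsoReg r w g1 p1) (h2 : IsIsoReg r w g2 p2) :
    ∑ i, (p1 i - p2 i) ^ 2 * w i ≤ ∑ i, (g1 i - g2 i) ^ 2 * w i := by
  have hv1 := iso_vi hw h1 h2.1
  have hv2 := iso_vi hw h2 h1.1
  set S : ℝ := ∑ i, (p1 i - p2 i) ^ 2 * w i with hS
  set C : ℝ := ∑ i, (g1 i - g2 i) * (p1 i - p2 i) * w i with hC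
  set G : ℝ := ∑ i, (g1 i - g2 i) ^ 2 * w i with hG
  have hSnn : 0 ≤ S := Finset.sum_nonneg fun i _ => mul_nonneg (sq_nonneg _) (hw i)
  have hGnn : 0 ≤ G := Finset.sum_nonneg fun i _ => mul_nonneg (sq_nonneg _) (hw i)
  have hSC : S ≤ C := by
    have hkey : S - C = ∑ i, ((g1 i - p1 i) * (p2 i - p1 i) * w i
        + (g2 i - p2 i) * (p1 i - p2 i) * w i) := by
      rw [hS, hC, ← Finset.sum_sub_distrib]
      exact Finset.sum_congr rfl fun i _ => by ring
    rw [Finset.sum_add_distrib] at hkey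
    linarith
  have hCS : C ^ 2 ≤ G * S := by
    have hcs := Finset.sum_mul_sq_le_sq_mul_sq Finset.univ
      (fun i => (g1 i - g2 i) * Real.sqrt (w i))
      (fun i => (p1 i - p2 i) * Real.sqrt (w i))
    have e1 : ∑ i, ((g1 i - g2 i) * Real.sqrt (w i)) * ((p1 i - p2 i) * Real.sqrt (w i)) = C := by
      rw [hC]
      refine Finset.sum_congr rfl fun i _ => ?_
      rw [mul_mul_mul_comm, Real.mul_self_sqrt (hw i)]
    have e2 : ∑ i, ((g1 i - g2 i) * Real.sqrt (w i)) ^ 2 = G := by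
      rw [hG]
      refine Finset.sum_congr rfl fun i _ => ?_
      rw [mul_pow, Real.sq_sqrt (hw i)]
    have e3 : ∑ i, ((p1 i - p2 i) * Real.sqrt (w i)) ^ 2 = S := by
      rw [hS]
      refine Finset.sum_congr rfl fun i _ => ?_
      rw [mul_pow, Real.sq_sqrt (hw i)]
    rw [e1, e2, e3] at hcs
    exact hcs
  nlinarith

lemma iso_affine {ι : Type*} [Fintype ι] {r : ι → ι → Prop} {w g p : ι → ℝ}
    (h : IsIsoReg r w g p) {c a : ℝ} (hc : 0 < c) :
    IsIsoReg r w (fun i => c * (g i - a)) (fun i => c * (p i - a)) := by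
  have hne : c ≠ 0 := hc.ne'
  constructor
  · intro i j hij
    have hpij := h.1 i j hij
    dsimp only
    nlinarith
  · intro ξ hξ
    have hfeas : ∀ i j, r i j → ξ i / c + a ≤ ξ j / c + a := by
      intro i j hij
      have h1 := hξ i j hij
      have h2 := (div_le_div_iff_of_pos_right hc).mpr h1
      linarith
    have hmin := h.2 (fun i => ξ i / c + a) hfeas
    have e1 : ∑ i, ((c * (p i - a)) - c * (g i - a)) ^ 2 * w i
        = c ^ 2 * ∑ i, (p i - g i) ^ 2 * w i := by
      rw [Finset.mul_sum]
      exact Finset.sum_congr rfl fun i _ => by ring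
    have e2 : ∑ i, (ξ i - c * (g i - a)) ^ 2 * w i
        = c ^ 2 * ∑ i, ((ξ i / c + a) - g i) ^ 2 * w i := by
      rw [Finset.mul_sum]
      refine Finset.sum_congr rfl fun i _ => ?_
      have hx : ξ i - c * (g i - a) = c * ((ξ i / c + a) - g i) := by
        field_simp; ring
      rw [hx, mul_pow]
      ring
    calc ∑ i, ((fun i => c * (p i - a)) i - (fun i => c * (g i - a)) i) ^ 2 * w i
        = c ^ 2 * ∑ i, (p i - g i) ^ 2 * w i := e1
      _ ≤ c ^ 2 * ∑ i, ((ξ i / c + a) - g i) ^ 2 * w i :=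
          mul_le_mul_of_nonneg_left hmin (sq_nonneg c)
      _ = ∑ i, (ξ i - (fun i => c * (g i - a)) i) ^ 2 * w i := e2.symm

lemma iso_glue {ι V : Type*} [Fintype ι] [Fintype V] [DecidableEq V]
    {r : ι → ι → Prop} {w g p : ι → ℝ} (L : ι → V)
    (hblock : ∀ v : V, IsIsoReg (fun a b : {i // L i = v} => r a b)
      (fun a => w a) (fun a => g a) (fun a => p a))
    (hiso : ∀ i j, r i j → p i ≤ p j) : IsIsoReg r w g p := by
  refine ⟨hiso, fun ξ hξ => ?_⟩
  have key : ∀ v : V, ∑ a : {i // L i = v}, (p a.1 - g a.1) ^ 2 * w a.1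
      ≤ ∑ a : {i // L i = v}, (ξ a.1 - g a.1) ^ 2 * w a.1 :=
    fun v => (hblock v).2 (fun a => ξ a.1) (fun a b hab => hξ a.1 b.1 hab)
  have hfib1 := Fintype.sum_fiberwise L (fun i => (p i - g i) ^ 2 * w i)
  have hfib2 := Fintype.sum_fiberwise L (fun i => (ξ i - g i) ^ 2 * w i)
  rw [← hfib1, ← hfib2]
  exact Finset.sum_le_sum fun v _ => key v


/-- the limit distribution of the isotonic regression estimator over a
finite pre-ordered index set: if `Bₙ(ĝₙ - g̊) ⇒ λ` then `Bₙ(ĝₙ* - g̊) ⇒ φ(λ)`, where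
`φ` performs separate isotonic regressions on the comparable level sets of `g̊`
(given by the level map `L`). Convergence in distribution is expressed via bounded
continuous test functions. -/
theorem stmt_17 {s : ℕ} (r : Fin s → Fin s → Prop)
    (hrefl : ∀ i, r i i) (htrans : ∀ i j k, r i j → r j k → r i k)
    (w : Fin s → ℝ) (hw : ∀ i, 0 < w i)
    {Ω : Type*} [MeasurableSpace Ω] (μ : Measure Ω) [IsProbabilityMeasure μ]
    (ghat ghatstar : ℕ → Ω → Fin s → ℝ) (g0 : Fin s → ℝ)
    (hg0 : ∀ i j, r i j → g0 i ≤ g0 j)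
    -- `L` is the canonical partition of the index set into the comparable level
    -- sets of `g0`:
    {m : ℕ} (L : Fin s → Fin m)
    (hLconst : ∀ i j, L i = L j → g0 i = g0 j)
    (hLclosed : ∀ i j, (r i j ∨ r j i) → g0 i = g0 j → L i = L j)
    (hLconn : ∀ i j, L i = L j →
      Relation.ReflTransGen (fun a b => (r a b ∨ r b a) ∧ g0 a = g0 b) i j)
    -- rates of convergence, positive and constant on each comparable level set:
    (q : Fin s → ℝ) (hq : ∀ i, 0 < q i) (hqL : ∀ i j, L i = L j → q i = q j)
    -- `ψ` maps a vector to the concatenation of the separate isotonic regressions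
    -- of its restrictions to the comparable level sets of `g0`:
    (ψ : (Fin s → ℝ) → (Fin s → ℝ))
    (hψ : ∀ θ : (Fin s → ℝ), ∀ v : Fin m,
      IsIsoReg (fun a b : {i // L i = v} => r a b) (fun a => w a)
        (fun a => θ a) (fun a => ψ θ a))
    -- `ghatstar n ω` is the isotonic regression of `ghat n ω`:
    (hreg : ∀ n ω, IsIsoReg r w (ghat n ω) (ghatstar n ω))
    (hmeas : ∀ n, Measurable (ghat n)) (hmeasstar : ∀ n, Measurable (ghatstar n))
    (Λ : Ω → Fin s → ℝ) (hΛ : Measurable Λ)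
    -- `ghat n → g0` in probability:
    (hprob : ∀ ε : ℝ, 0 < ε →
      Tendsto (fun n => μ {ω | ε ≤ dist (ghat n ω) g0}) atTop (nhds 0))
    -- `Bₙ(ĝₙ - g̊) ⇒ λ` in distribution:
    (hdist : ∀ f : BoundedContinuousFunction (Fin s → ℝ) ℝ,
      Tendsto (fun (n : ℕ) => ∫ ω, f (fun i => (n : ℝ) ^ (q i) * (ghat n ω i - g0 i)) ∂μ)
        atTop (nhds (∫ ω, f (Λ ω) ∂μ))) :
    -- conclusion: `Bₙ(ĝₙ* - g̊) ⇒ φ(λ)`: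
    ∀ f : BoundedContinuousFunction (Fin s → ℝ) ℝ,
      Tendsto (fun (n : ℕ) => ∫ ω, f (fun i => (n : ℝ) ^ (q i) * (ghatstar n ω i - g0 i)) ∂μ)
        atTop (nhds (∫ ω, f (ψ (Λ ω)) ∂μ)) := by
  classical
  intro f
  -- continuity of ψ
  have hψc : Continuous ψ := by
    rw [continuous_pi_iff]
    intro i
    set C : ℝ := (∑ a, w a) / w i with hCdef
    have hCnn : 0 ≤ C := div_nonneg (Finset.sum_nonneg fun a _ => (hw a).le) (hw i).le
    refine LipschitzWith.continuous (K := Real.toNNReal (Real.sqrt C))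
      (LipschitzWith.of_dist_le_mul fun θ θ' => ?_)
    have hcon := iso_contract (fun a : {x // L x = L i} => (hw a.1).le)
      (hψ θ (L i)) (hψ θ' (L i))
    have e1 : (ψ θ i - ψ θ' i) ^ 2 * w i
        ≤ ∑ a : {x // L x = L i}, (ψ θ a.1 - ψ θ' a.1) ^ 2 * w a.1 := by
      have := Finset.single_le_sum
        (f := fun a : {x // L x = L i} => (ψ θ a.1 - ψ θ' a.1) ^ 2 * w a.1)
        (fun a _ => mul_nonneg (sq_nonneg _) (hw a.1).le)
        (Finset.mem_univ (⟨i, rfl⟩ : {x // L x = L i}))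
      simpa using this
    have e3 : ∑ a : {x // L x = L i}, (θ a.1 - θ' a.1) ^ 2 * w a.1
        ≤ dist θ θ' ^ 2 * ∑ a : {x // L x = L i}, w a.1 := by
      rw [Finset.mul_sum]
      refine Finset.sum_le_sum fun a _ => ?_
      have h0 : |θ a.1 - θ' a.1| ≤ dist θ θ' := by
        rw [← Real.dist_eq]; exact dist_le_pi_dist θ θ' a.1
      have h1 : (θ a.1 - θ' a.1) ^ 2 ≤ dist θ θ' ^ 2 := by
        rw [← sq_abs]
        exact pow_le_pow_left₀ (abs_nonneg _) h0 2
      exact mul_le_mul_of_nonneg_right h1 (hw a.1).le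
    have e4 : ∑ a : {x // L x = L i}, w a.1 ≤ ∑ j, w j := by
      have hsub : ∑ a : {x // L x = L i}, w a.1
          = ∑ j ∈ Finset.univ.filter (fun x => L x = L i), w j :=
        (Finset.sum_subtype (p := fun x => L x = L i)
          (Finset.univ.filter (fun x => L x = L i)) (fun x => by simp) w).symm
      rw [hsub]
      exact Finset.sum_le_sum_of_subset_of_nonneg (Finset.filter_subset _ _)
        (fun j _ _ => (hw j).le)
    have hsq : (ψ θ i - ψ θ' i) ^ 2 ≤ C * dist θ θ' ^ 2 := by
      rw [hCdef]
      rw [div_mul_eq_mul_div, le_div_iff₀ (hw i)]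
      calc (ψ θ i - ψ θ' i) ^ 2 * w i
          ≤ dist θ θ' ^ 2 * ∑ a : {x // L x = L i}, w a.1 :=
            le_trans e1 (le_trans hcon e3)
        _ ≤ dist θ θ' ^ 2 * ∑ j, w j :=
            mul_le_mul_of_nonneg_left e4 (sq_nonneg _)
        _ = (∑ a, w a) * dist θ θ' ^ 2 := by ring
    have : dist (ψ θ i) (ψ θ' i) ≤ Real.sqrt C * dist θ θ' := by
      rw [Real.dist_eq, ← Real.sqrt_sq_eq_abs]
      calc Real.sqrt ((ψ θ i - ψ θ' i) ^ 2)
          ≤ Real.sqrt (C * dist θ θ' ^ 2) := Real.sqrt_le_sqrt hsq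
        _ = Real.sqrt C * dist θ θ' := by
            rw [Real.sqrt_mul hCnn, Real.sqrt_sq dist_nonneg]
    rwa [Real.coe_toNNReal _ (Real.sqrt_nonneg _)]
  -- equivariance
  have hequiv : ∀ (θ c : Fin s → ℝ), (∀ i, 0 < c i) → (∀ i j, L i = L j → c i = c j) →
      ψ (fun i => c i * (θ i - g0 i)) = fun i => c i * (ψ θ i - g0 i) := by
    intro θ c hc hcL
    funext i
    have haff := iso_affine (hψ θ (L i)) (c := c i) (a := g0 i) (hc i)
    have hb' := hψ (fun j => c j * (θ j - g0 j)) (L i)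
    have hdata : (fun a : {x // L x = L i} => c a.1 * (θ a.1 - g0 a.1))
        = (fun a : {x // L x = L i} => c i * (θ a.1 - g0 i)) := by
      funext a
      rw [hcL a.1 i a.2, hLconst a.1 i a.2]
    rw [show (fun a : {x // L x = L i} => (fun j => c j * (θ j - g0 j)) a.1)
        = (fun a : {x // L x = L i} => c i * (θ a.1 - g0 i)) from hdata] at hb'
    have heq := iso_unique (fun a : {x // L x = L i} => hw a.1) hb'
      (by
        convert haff using 2
        )
    exact congrFun heq (⟨i, rfl⟩ : {x // L x = L i})
  -- the minimal comparable level gap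
  set P : Finset (Fin s × Fin s) :=
    Finset.univ.filter (fun p => (r p.1 p.2 ∨ r p.2 p.1) ∧ g0 p.1 ≠ g0 p.2) with hPdef
  set δ : ℝ := if hne : P.Nonempty then P.inf' hne (fun p => |g0 p.1 - g0 p.2|) else 1
    with hδdef
  have hδpos : 0 < δ := by
    rw [hδdef]
    split_ifs with hne
    · rw [Finset.lt_inf'_iff]
      intro p hp
      have hpp := (Finset.mem_filter.mp hp).2.2
      exact abs_pos.mpr (sub_ne_zero.mpr hpp)
    · exact one_pos
  have hδle : ∀ i j, (r i j ∨ r j i) → g0 i ≠ g0 j → δ ≤ |g0 i - g0 j| := by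
    intro i j h1 h2
    have hmem : (i, j) ∈ P := Finset.mem_filter.mpr ⟨Finset.mem_univ _, h1, h2⟩
    rw [hδdef, dif_pos ⟨_, hmem⟩]
    exact Finset.inf'_le _ hmem
  -- separation: near g0, the global isotonic regression is the blockwise one
  have hsep : ∀ gh gs : Fin s → ℝ, (∀ i, |gh i - g0 i| ≤ δ / 3) →
      IsIsoReg r w gh gs → gs = ψ gh := by
    intro gh gs hclose hgs
    have hiso : ∀ i j, r i j → ψ gh i ≤ ψ gh j := by
      intro i j hij
      by_cases hL : L i = L j
      · exact (hψ gh (L j)).1 ⟨i, hL⟩ ⟨j, rfl⟩ hij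
      · have hub : ψ gh i ≤ g0 i + δ / 3 :=
          (iso_clamp (fun a : {x // L x = L i} => hw a.1) (hψ gh (L i))
            (lo := g0 i - δ / 3) (hi := g0 i + δ / 3)
            (fun a => by
              have h1 := abs_le.mp (hclose a.1)
              have h2 := hLconst a.1 i a.2
              linarith [h1.1])
            (fun a => by
              have h1 := abs_le.mp (hclose a.1)
              have h2 := hLconst a.1 i a.2
              linarith [h1.2])
            (⟨i, rfl⟩ : {x // L x = L i})).2
        have hlb : g0 j - δ / 3 ≤ ψ gh j :=
          (iso_clamp (fun a : {x // L x = L j} => hw a.1) (hψ gh (L j))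
            (lo := g0 j - δ / 3) (hi := g0 j + δ / 3)
            (fun a => by
              have h1 := abs_le.mp (hclose a.1)
              have h2 := hLconst a.1 j a.2
              linarith [h1.1])
            (fun a => by
              have h1 := abs_le.mp (hclose a.1)
              have h2 := hLconst a.1 j a.2
              linarith [h1.2])
            (⟨j, rfl⟩ : {x // L x = L j})).1
        have hle0 : g0 i ≤ g0 j := hg0 i j hij
        have hne0 : g0 i ≠ g0 j := fun he => hL (hLclosed i j (Or.inl hij) he)
        have hdel : δ ≤ g0 j - g0 i := by
          have h1 := hδle i j (Or.inl hij) hne0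
          rwa [abs_sub_comm, abs_of_nonneg (by linarith)] at h1
        linarith
    exact iso_unique hw hgs (iso_glue L (hψ gh) hiso)
  -- key pointwise identity for n ≥ 1 on the good event
  have hkey : ∀ n : ℕ, 1 ≤ n → ∀ ω : Ω, dist (ghat n ω) g0 < δ / 3 →
      (fun i => (n : ℝ) ^ (q i) * (ghatstar n ω i - g0 i))
        = ψ (fun i => (n : ℝ) ^ (q i) * (ghat n ω i - g0 i)) := by
    intro n hn ω hω
    have hnpos : (0 : ℝ) < (n : ℝ) := by exact_mod_cast hn
    have hc : ∀ i, 0 < (n : ℝ) ^ (q i) := fun i => Real.rpow_pos_of_pos hnpos _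
    have hcL : ∀ i j, L i = L j → (n : ℝ) ^ (q i) = (n : ℝ) ^ (q j) :=
      fun i j hij => by rw [hqL i j hij]
    have hclose : ∀ i, |ghat n ω i - g0 i| ≤ δ / 3 := by
      intro i
      have := dist_le_pi_dist (ghat n ω) g0 i
      rw [Real.dist_eq] at this
      linarith
    have hstar : ghatstar n ω = ψ (ghat n ω) := hsep _ _ hclose (hreg n ω)
    rw [hequiv (ghat n ω) (fun i => (n : ℝ) ^ (q i)) hc hcL, hstar]
  -- the composed test function
  set fψ : BoundedContinuousFunction (Fin s → ℝ) ℝ :=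
    f.compContinuous ⟨ψ, hψc⟩ with hfψdef
  have hlim2 : Tendsto (fun n : ℕ =>
      ∫ ω, fψ (fun i => (n : ℝ) ^ (q i) * (ghat n ω i - g0 i)) ∂μ)
      atTop (nhds (∫ ω, f (ψ (Λ ω)) ∂μ)) := hdist fψ
  -- measurability and integrability
  have hTcont : ∀ n : ℕ, Continuous
      (fun x : Fin s → ℝ => fun i => (n : ℝ) ^ (q i) * (x i - g0 i)) :=
    fun n => continuous_pi fun i =>
      continuous_const.mul ((continuous_apply i).sub continuous_const)
  have hint : ∀ (G : Ω → ℝ) (Cb : ℝ), Measurable G → (∀ ω, ‖G ω‖ ≤ Cb) →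
      Integrable G μ := by
    intro G Cb hm hb
    exact ⟨hm.aestronglyMeasurable,
      MeasureTheory.HasFiniteIntegral.of_bounded (C := Cb) (ae_of_all μ hb)⟩
  have hintF1 : ∀ n : ℕ, Integrable
      (fun ω => f (fun i => (n : ℝ) ^ (q i) * (ghatstar n ω i - g0 i))) μ :=
    fun n => hint _ ‖f‖
      ((f.continuous.comp (hTcont n)).measurable.comp (hmeasstar n))
      (fun ω => f.norm_coe_le_norm _)
  have hintF2 : ∀ n : ℕ, Integrable
      (fun ω => fψ (fun i => (n : ℝ) ^ (q i) * (ghat n ω i - g0 i))) μ :=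
    fun n => hint _ ‖fψ‖
      ((fψ.continuous.comp (hTcont n)).measurable.comp (hmeas n))
      (fun ω => fψ.norm_coe_le_norm _)
  -- the difference of integrals tends to 0
  have hμ0 := hprob (δ / 3) (by linarith)
  have hμreal : Tendsto (fun n => (μ {ω | δ / 3 ≤ dist (ghat n ω) g0}).toReal)
      atTop (nhds 0) := by
    have := (ENNReal.tendsto_toReal (by simp : (0 : ENNReal) ≠ ⊤)).comp hμ0
    simpa [Function.comp_def] using this
  have hb0 : Tendsto (fun n => (μ {ω | δ / 3 ≤ dist (ghat n ω) g0}).toReal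
      * (‖f‖ + ‖fψ‖)) atTop (nhds 0) := by
    simpa using hμreal.mul_const (‖f‖ + ‖fψ‖)
  have hdiff : Tendsto (fun n : ℕ =>
      (∫ ω, f (fun i => (n : ℝ) ^ (q i) * (ghatstar n ω i - g0 i)) ∂μ)
        - ∫ ω, fψ (fun i => (n : ℝ) ^ (q i) * (ghat n ω i - g0 i)) ∂μ)
      atTop (nhds 0) := by
    refine squeeze_zero_norm' ?_ hb0
    rw [eventually_atTop]
    refine ⟨1, fun n hn => ?_⟩
    set A : Set Ω := {ω | δ / 3 ≤ dist (ghat n ω) g0} with hAdef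
    have hAmeas : MeasurableSet A := by
      have hd : Measurable (fun ω => dist (ghat n ω) g0) :=
        (continuous_id.dist continuous_const).measurable.comp (hmeas n)
      exact measurableSet_le measurable_const hd
    set F1 : Ω → ℝ := fun ω => f (fun i => (n : ℝ) ^ (q i) * (ghatstar n ω i - g0 i))
    set F2 : Ω → ℝ := fun ω => fψ (fun i => (n : ℝ) ^ (q i) * (ghat n ω i - g0 i))
    have heqoff : ∀ ω, ω ∉ A → F1 ω = F2 ω := by
      intro ω hω
      have hlt : dist (ghat n ω) g0 < δ / 3 := lt_of_not_ge hω
      show f _ = fψ _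
      rw [hfψdef]
      simp only [BoundedContinuousFunction.compContinuous_apply,
        ContinuousMap.coe_mk]
      exact congrArg f (hkey n hn ω hlt)
    have hnormbound : ∀ ω, ‖F1 ω - F2 ω‖
        ≤ A.indicator (fun _ => ‖f‖ + ‖fψ‖) ω := by
      intro ω
      by_cases hω : ω ∈ A
      · rw [Set.indicator_of_mem hω]
        calc ‖F1 ω - F2 ω‖ ≤ ‖F1 ω‖ + ‖F2 ω‖ := norm_sub_le _ _
          _ ≤ ‖f‖ + ‖fψ‖ :=
            add_le_add (f.norm_coe_le_norm _) (fψ.norm_coe_le_norm _)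
      · rw [Set.indicator_of_notMem hω, heqoff ω hω, sub_self, norm_zero]
    calc ‖(∫ ω, F1 ω ∂μ) - ∫ ω, F2 ω ∂μ‖
        = ‖∫ ω, (F1 ω - F2 ω) ∂μ‖ := by
          rw [integral_sub (hintF1 n) (hintF2 n)]
      _ ≤ ∫ ω, ‖F1 ω - F2 ω‖ ∂μ := norm_integral_le_integral_norm _
      _ ≤ ∫ ω, A.indicator (fun _ => ‖f‖ + ‖fψ‖) ω ∂μ := by
          refine integral_mono ((hintF1 n).sub (hintF2 n)).norm
            ((integrable_const _).indicator hAmeas) hnormbound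
      _ = (μ A).toReal * (‖f‖ + ‖fψ‖) := by
          rw [integral_indicator_const _ hAmeas]
          simp [smul_eq_mul, measureReal_def]
  -- conclude
  have hfinal := hdiff.add hlim2
  rw [zero_add] at hfinal
  refine hfinal.congr fun n => ?_
  ring
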